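/- arXiv:1010.6160 — 4 statements merged into one kernel-verified Lean document; each statement's English description precedes it below -/
import Mathlib

section
/- Let Ω be a fundamental domain for a full-rank lattice Λ in ℝ^d that is star-shaped with respect to a point N ∈ Ω (for every Q ∈ Ω the segment from N to Q lies in Ω). Then for every 0 < γ ≤ 1, the set γ·(Ω − N) is a packing set for Λ. -/
open MeasureTheory Set

noncomputable section

def latVec {d : ℕ} (M : Matrix (Fin d) (Fin d) ℝ) (k : Fin d → ℤ) :
    EuclideanSpace ℝ (Fin d) :=
  WithLp.toLp 2 (M.mulVec (fun i => (k i : ℝ)))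

def trSet {d : ℕ} (v : EuclideanSpace ℝ (Fin d)) (Ω : Set (EuclideanSpace ℝ (Fin d))) :
    Set (EuclideanSpace ℝ (Fin d)) :=
  (· + v) '' Ω

def IsPacking {d : ℕ} (M : Matrix (Fin d) (Fin d) ℝ)
    (Ω : Set (EuclideanSpace ℝ (Fin d))) : Prop :=
  ∀ k l : Fin d → ℤ, k ≠ l →
    volume (trSet (latVec M k) Ω ∩ trSet (latVec M l) Ω) = 0

def IsFundamentalDomain' {d : ℕ} (M : Matrix (Fin d) (Fin d) ℝ)
    (Ω : Set (EuclideanSpace ℝ (Fin d))) : Prop :=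
  IsPacking M Ω ∧
    volume ((univ : Set (EuclideanSpace ℝ (Fin d))) \ ⋃ k : Fin d → ℤ, trSet (latVec M k) Ω) = 0

/-- `Ω` is star-shaped with respect to the point `N ∈ Ω`. -/
def StarShapedAt {d : ℕ} (Ω : Set (EuclideanSpace ℝ (Fin d)))
    (N : EuclideanSpace ℝ (Fin d)) : Prop :=
  N ∈ Ω ∧ ∀ Q ∈ Ω, ∀ t ∈ Set.Icc (0 : ℝ) 1, (1 - t) • N + t • Q ∈ Ω

theorem scaled_starshaped_fundamental_domain_is_packing {d : ℕ}
    (M : Matrix (Fin d) (Fin d) ℝ) (hM : M.det ≠ 0)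
    (Ω : Set (EuclideanSpace ℝ (Fin d)))
    (N : EuclideanSpace ℝ (Fin d))
    (hfund : IsFundamentalDomain' M Ω)
    (hstar : StarShapedAt Ω N)
    (γ : ℝ) (hγ0 : 0 < γ) (hγ1 : γ ≤ 1) :
    IsPacking M ((fun y => γ • y) '' ((fun y => y - N) '' Ω)) := by
  intro k l hkl
  have h0 := hfund.1 k l hkl
  have hsub : trSet (latVec M k) ((fun y => γ • y) '' ((fun y => y - N) '' Ω)) ∩
      trSet (latVec M l) ((fun y => γ • y) '' ((fun y => y - N) '' Ω)) ⊆
      (fun x => x + N) ⁻¹' (trSet (latVec M k) Ω ∩ trSet (latVec M l) Ω) := by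
    rintro x ⟨hx1, hx2⟩
    have key : ∀ v : EuclideanSpace ℝ (Fin d),
        x ∈ trSet v ((fun y => γ • y) '' ((fun y => y - N) '' Ω)) →
        x + N ∈ trSet v Ω := by
      rintro v ⟨_, ⟨_, ⟨z, hz, rfl⟩, rfl⟩, rfl⟩
      refine ⟨(1 - γ) • N + γ • z, hstar.2 z hz γ ⟨le_of_lt hγ0, hγ1⟩, ?_⟩
      have : γ • (z - N) + v + N = (1 - γ) • N + γ • z + v := by
        module
      exact this.symm
    exact ⟨key _ hx1, key _ hx2⟩
  refine measure_mono_null hsub ?_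
  rw [measure_preimage_add_right]
  exact h0
end
end

section
/- Let A and B be invertible d×d real matrices, and let Ω ⊆ ℝ^d be a fundamental domain for the lattice A·ℤ^d which is also a packing set for the lattice B^{−T}·ℤ^d. Then for all (x,ω), (x',ω') in B^{−T}ℤ^d × A^{−T}ℤ^d with (x,ω) ≠ (x',ω'), the functions M_ω T_x χ_Ω and M_{ω'} T_{x'} χ_Ω are orthogonal in L²(ℝ^d), and each has L²-norm |det A|^{1/2}. In particular ((m(Ω))^{−1/2} χ_Ω, B^{−T}ℤ^d × A^{−T}ℤ^d) is an orthonormal system in L²(ℝ^d). -/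
open MeasureTheory Set Matrix
open scoped RealInnerProductSpace ENNReal

noncomputable section

/-- The time-frequency shift `M_ω T_x g`. -/
def tfShift {d : ℕ} (x ω : EuclideanSpace ℝ (Fin d))
    (g : EuclideanSpace ℝ (Fin d) → ℂ) (t : EuclideanSpace ℝ (Fin d)) : ℂ :=
  Complex.exp (2 * Real.pi * Complex.I * (⟪ω, t⟫ : ℝ)) * g (t - x)

/-- The indicator of `Ω` as a complex-valued function. -/
def chi {d : ℕ} (Ω : Set (EuclideanSpace ℝ (Fin d))) :
    EuclideanSpace ℝ (Fin d) → ℂ :=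
  Ω.indicator fun _ => (1 : ℂ)


variable {d : ℕ}

local notation "E" => EuclideanSpace ℝ (Fin d)

lemma latVec_add (M : Matrix (Fin d) (Fin d) ℝ) (k l : Fin d → ℤ) :
    latVec M (k + l) = latVec M k + latVec M l := by
  simp only [latVec]
  rw [show (fun i => (((k + l) i : ℤ) : ℝ)) = (fun i => (k i : ℝ)) + (fun i => (l i : ℝ)) by
    funext i; simp]
  rw [M.mulVec_add, WithLp.toLp_add]

lemma latVec_neg (M : Matrix (Fin d) (Fin d) ℝ) (k : Fin d → ℤ) :
    latVec M (-k) = - latVec M k := by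
  simp only [latVec]
  rw [show (fun i => (((-k) i : ℤ) : ℝ)) = -(fun i => (k i : ℝ)) by funext i; simp]
  rw [M.mulVec_neg, WithLp.toLp_neg]

lemma trSet_eq_preimage (v : E) (s : Set E) : trSet v s = (· + (-v)) ⁻¹' s := by
  ext t
  constructor
  · rintro ⟨w, hw, rfl⟩; simpa using hw
  · intro ht; exact ⟨t + (-v), ht, by simp⟩

lemma mem_trSet {v t : E} {s : Set E} : t ∈ trSet v s ↔ t - v ∈ s := by
  rw [trSet_eq_preimage]; simp [sub_eq_add_neg]

lemma volume_trSet (v : E) (s : Set E) : volume (trSet v s) = volume s := by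
  rw [trSet_eq_preimage]; exact measure_preimage_add_right volume (-v) s

lemma measurableSet_trSet (v : E) {s : Set E} (hs : MeasurableSet s) :
    MeasurableSet (trSet v s) := by
  rw [trSet_eq_preimage]; exact (measurable_add_const (-v)) hs

lemma trSet_inter (v : E) (s t : Set E) :
    trSet v (s ∩ t) = trSet v s ∩ trSet v t := by
  simp only [trSet_eq_preimage, preimage_inter]

lemma trSet_trSet (v w : E) (s : Set E) : trSet v (trSet w s) = trSet (v + w) s := by
  ext t; simp [mem_trSet, sub_sub]

lemma trSet_zero (s : Set E) : trSet 0 s = s := by ext t; simp [mem_trSet]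

lemma setIntegral_trSet (v : E) (s : Set E) (f : E → ℂ) :
    ∫ t in trSet v s, f t = ∫ t in s, f (t + v) := by
  rw [trSet_eq_preimage]
  have h := (measurePreserving_add_right (volume : Measure E) (-v)).setIntegral_preimage_emb
    (measurableEmbedding_addRight (-v)) (fun y => f (y + v)) s
  simp only [neg_add_cancel_right] at h
  exact h

def unitCube (d : ℕ) : Set (EuclideanSpace ℝ (Fin d)) :=
  ((MeasurableEquiv.toLp 2 (Fin d → ℝ)).symm) ⁻¹' (Set.univ.pi fun _ => Set.Ico (0:ℝ) 1)

lemma mem_unitCube (x : E) : x ∈ unitCube d ↔ ∀ i, x i ∈ Set.Ico (0:ℝ) 1 := by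
  simp [unitCube, Set.mem_pi]
 

lemma measurableSet_unitCube : MeasurableSet (unitCube d) :=
  ((MeasurableEquiv.toLp 2 (Fin d → ℝ)).symm).measurable
    (MeasurableSet.univ_pi fun _ => measurableSet_Ico)

lemma volume_unitCube : volume (unitCube d) = 1 := by
  rw [unitCube,
    (EuclideanSpace.volume_preserving_symm_measurableEquiv_toLp (Fin d)).measure_preimage
      (MeasurableSet.univ_pi fun _ => measurableSet_Ico).nullMeasurableSet]
  simp [volume_pi_pi]

def AEquiv (A : Matrix (Fin d) (Fin d) ℝ) (hA : A.det ≠ 0) :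
    EuclideanSpace ℝ (Fin d) ≃ₗ[ℝ] EuclideanSpace ℝ (Fin d) :=
  LinearEquiv.ofLinear (Matrix.toEuclideanLin A) (Matrix.toEuclideanLin A⁻¹)
    (by
      apply LinearMap.ext; intro x
      simp only [LinearMap.comp_apply, Matrix.toEuclideanLin_apply, LinearMap.id_apply]
      simp [Matrix.mulVec_mulVec, Matrix.mul_nonsing_inv A (isUnit_iff_ne_zero.2 hA)])
    (by
      apply LinearMap.ext; intro x
      simp only [LinearMap.comp_apply, Matrix.toEuclideanLin_apply, LinearMap.id_apply]
      simp [Matrix.mulVec_mulVec, Matrix.nonsing_inv_mul A (isUnit_iff_ne_zero.2 hA)])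

def QSet (A : Matrix (Fin d) (Fin d) ℝ) (hA : A.det ≠ 0) : Set (EuclideanSpace ℝ (Fin d)) :=
  (AEquiv A hA) '' unitCube d

lemma intCast_eucl (k : Fin d → ℤ) : (WithLp.toLp 2 (fun i => (k i : ℝ)) : EuclideanSpace ℝ (Fin d)) =
    WithLp.toLp 2 (fun i => (k i : ℝ)) := rfl

lemma AEquiv_symm_latVec (A : Matrix (Fin d) (Fin d) ℝ) (hA : A.det ≠ 0) (k : Fin d → ℤ) :
    (AEquiv A hA).symm (latVec A k) = (WithLp.toLp 2 (fun i => (k i : ℝ)) : EuclideanSpace ℝ (Fin d)) := by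
  simp only [AEquiv, LinearEquiv.ofLinear_symm_apply, latVec, Matrix.toEuclideanLin_apply]
  show WithLp.toLp 2 (A⁻¹.mulVec (A.mulVec _)) = _
  simp [Matrix.mulVec_mulVec, Matrix.nonsing_inv_mul A (isUnit_iff_ne_zero.2 hA)]

lemma mem_trSet_QSet (A : Matrix (Fin d) (Fin d) ℝ) (hA : A.det ≠ 0) (k : Fin d → ℤ) (t : E) :
    t ∈ trSet (latVec A k) (QSet A hA) ↔ ∀ i, ⌊((AEquiv A hA).symm t) i⌋ = k i := by
  rw [mem_trSet, QSet]
  rw [show (t - latVec A k ∈ (AEquiv A hA) '' unitCube d) ↔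
      (AEquiv A hA).symm (t - latVec A k) ∈ unitCube d by
    constructor
    · rintro ⟨w, hw, hw2⟩; rw [← hw2]; simpa using hw
    · intro h; exact ⟨_, h, by simp⟩]
  rw [map_sub, AEquiv_symm_latVec A hA k, mem_unitCube]
  refine forall_congr' fun i => ?_
  rw [Int.floor_eq_iff]
  show (0 ≤ (AEquiv A hA).symm t i - (k i : ℝ) ∧ (AEquiv A hA).symm t i - (k i : ℝ) < 1) ↔ _
  constructor
  · rintro ⟨h1, h2⟩; constructor <;> [linarith; linarith]
  · rintro ⟨h1, h2⟩; push_cast at h2; constructor <;> [linarith; linarith]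

lemma QSet_cover (A : Matrix (Fin d) (Fin d) ℝ) (hA : A.det ≠ 0) :
    (⋃ k : Fin d → ℤ, trSet (latVec A k) (QSet A hA)) = univ := by
  ext t
  simp only [mem_iUnion, mem_univ, iff_true]
  exact ⟨fun i => ⌊((AEquiv A hA).symm t) i⌋, by simp [mem_trSet_QSet A hA]⟩

lemma QSet_disjoint (A : Matrix (Fin d) (Fin d) ℝ) (hA : A.det ≠ 0) :
    Pairwise (Function.onFun Disjoint fun k : Fin d → ℤ => trSet (latVec A k) (QSet A hA)) := by
  intro k l hkl
  rw [Function.onFun, Set.disjoint_left]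
  intro t htk htl
  rw [mem_trSet_QSet A hA] at htk htl
  exact hkl (funext fun i => (htk i).symm.trans (htl i))

lemma measurableSet_QSet (A : Matrix (Fin d) (Fin d) ℝ) (hA : A.det ≠ 0) :
    MeasurableSet (QSet A hA) := by
  have : QSet A hA = (AEquiv A hA).symm ⁻¹' unitCube d := by
    ext t
    constructor
    · rintro ⟨w, hw, rfl⟩; simpa using hw
    · intro h; exact ⟨_, h, by simp⟩
  rw [this]
  have hc : Continuous ((AEquiv A hA).symm : E → E) :=
    LinearMap.continuous_of_finiteDimensional _
  exact hc.measurable measurableSet_unitCube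

lemma det_AEquiv (A : Matrix (Fin d) (Fin d) ℝ) (hA : A.det ≠ 0) :
    LinearMap.det ((AEquiv A hA) : E →ₗ[ℝ] E) = A.det := by
  show LinearMap.det (Matrix.toEuclideanLin A) = A.det
  have : Matrix.toEuclideanLin A =
      ((WithLp.linearEquiv 2 ℝ (Fin d → ℝ)).symm : (Fin d → ℝ) →ₗ[ℝ] E) ∘ₗ
        (Matrix.toLin' A) ∘ₗ
        (((WithLp.linearEquiv 2 ℝ (Fin d → ℝ)).symm.symm :
          E →ₗ[ℝ] (Fin d → ℝ))) := rfl
  rw [this, LinearMap.det_conj (Matrix.toLin' A) (WithLp.linearEquiv 2 ℝ (Fin d → ℝ)).symm,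
    LinearMap.det_toLin']

lemma volume_QSet (A : Matrix (Fin d) (Fin d) ℝ) (hA : A.det ≠ 0) :
    volume (QSet A hA) = ENNReal.ofReal |A.det| := by
  rw [QSet, show ((AEquiv A hA) '' unitCube d) = ((AEquiv A hA : E →ₗ[ℝ] E) '' unitCube d) from rfl,
    Measure.addHaar_image_linearMap, det_AEquiv A hA, volume_unitCube, mul_one]


lemma latVec_zero (M : Matrix (Fin d) (Fin d) ℝ) : latVec M 0 = 0 := by
  simp only [latVec]
  rw [show (fun i => (((0 : Fin d → ℤ) i : ℤ) : ℝ)) = (0 : Fin d → ℝ) by funext i; simp]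
  rw [M.mulVec_zero, WithLp.toLp_zero]

lemma latVec_sub (M : Matrix (Fin d) (Fin d) ℝ) (k l : Fin d → ℤ) :
    latVec M (k - l) = latVec M k - latVec M l := by
  rw [sub_eq_add_neg, latVec_add, latVec_neg, sub_eq_add_neg]

lemma volume_le_QSet (A : Matrix (Fin d) (Fin d) ℝ) (hA : A.det ≠ 0)
    {Ω : Set (EuclideanSpace ℝ (Fin d))} (hΩ : MeasurableSet Ω) (hpk : IsPacking A Ω) :
    volume Ω ≤ ENNReal.ofReal |A.det| := by
  have h1 : Ω = ⋃ k : Fin d → ℤ, Ω ∩ trSet (latVec A k) (QSet A hA) := by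
    rw [← inter_iUnion, QSet_cover A hA, inter_univ]
  have hkey : ∀ k : Fin d → ℤ, volume (Ω ∩ trSet (latVec A k) (QSet A hA)) =
      volume (trSet (latVec A (-k)) Ω ∩ QSet A hA) := by
    intro k
    have h2 : trSet (latVec A (-k)) (Ω ∩ trSet (latVec A k) (QSet A hA)) =
        trSet (latVec A (-k)) Ω ∩ QSet A hA := by
      rw [trSet_inter, trSet_trSet, ← latVec_add]
      rw [show (-k + k) = (0 : Fin d → ℤ) by simp, latVec_zero, trSet_zero]
    rw [← h2, volume_trSet]
  calc volume Ω = ∑' k : Fin d → ℤ, volume (Ω ∩ trSet (latVec A k) (QSet A hA)) := by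
        conv_lhs => rw [h1]
        refine measure_iUnion ?_ fun k => hΩ.inter (measurableSet_trSet _ (measurableSet_QSet A hA))
        exact (QSet_disjoint A hA).mono fun k l h =>
          h.mono inter_subset_right inter_subset_right
    _ = ∑' k : Fin d → ℤ, volume (trSet (latVec A (-k)) Ω ∩ QSet A hA) := by
        exact tsum_congr hkey
    _ = volume (⋃ k : Fin d → ℤ, trSet (latVec A (-k)) Ω ∩ QSet A hA) := by
        refine (measure_iUnion₀ ?_ fun k => ((measurableSet_trSet _ hΩ).inter
          (measurableSet_QSet A hA)).nullMeasurableSet).symm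
        intro k l hkl
        have hd : AEDisjoint volume (trSet (latVec A (-k)) Ω) (trSet (latVec A (-l)) Ω) :=
          hpk (-k) (-l) (fun h => hkl (neg_injective h))
        exact hd.mono inter_subset_left inter_subset_left
    _ ≤ volume (QSet A hA) := measure_mono (iUnion_subset fun k => inter_subset_right)
    _ = ENNReal.ofReal |A.det| := volume_QSet A hA

lemma integrableOn_of_bounded {s : Set (EuclideanSpace ℝ (Fin d))} (hs : volume s ≠ ⊤)
    {f : EuclideanSpace ℝ (Fin d) → ℂ} (hf : Measurable f) (hb : ∀ t, ‖f t‖ ≤ 1) :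
    IntegrableOn f s := by
  have : IsFiniteMeasure (volume.restrict s) :=
    ⟨by rw [Measure.restrict_apply_univ]; exact lt_top_iff_ne_top.2 hs⟩
  exact Integrable.mono' (integrable_const 1) hf.aestronglyMeasurable (ae_of_all _ hb)

lemma integral_eq_tsum_pieces (S T : Set (EuclideanSpace ℝ (Fin d)))
    (hS : MeasurableSet S) (hT : MeasurableSet T) (w : (Fin d → ℤ) → EuclideanSpace ℝ (Fin d))
    (hcov : volume ((univ : Set (EuclideanSpace ℝ (Fin d))) \ ⋃ k, trSet (w k) T) = 0)
    (hdis : ∀ k l : Fin d → ℤ, k ≠ l → volume (trSet (w k) T ∩ trSet (w l) T) = 0)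
    (f : EuclideanSpace ℝ (Fin d) → ℂ) (hf : IntegrableOn f S) :
    ∫ t in S, f t = ∑' k : Fin d → ℤ, ∫ t in S ∩ trSet (w k) T, f t := by
  have hmeas : ∀ k, MeasurableSet (S ∩ trSet (w k) T) :=
    fun k => hS.inter (measurableSet_trSet _ hT)
  have hae : S =ᵐ[volume] ⋃ k, S ∩ trSet (w k) T := by
    rw [ae_eq_set]
    constructor
    · have hsub : S \ (⋃ k, S ∩ trSet (w k) T) ⊆
          (univ : Set (EuclideanSpace ℝ (Fin d))) \ ⋃ k, trSet (w k) T := by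
        intro x hx
        refine ⟨trivial, fun hmem => ?_⟩
        rcases mem_iUnion.1 hmem with ⟨k, hk⟩
        exact hx.2 (mem_iUnion.2 ⟨k, hx.1, hk⟩)
      exact measure_mono_null hsub hcov
    · rw [diff_eq_empty.2 (iUnion_subset fun k => inter_subset_left)]
      exact measure_empty
  rw [setIntegral_congr_set hae]
  refine integral_iUnion_ae (fun k => (hmeas k).nullMeasurableSet) ?_ ?_
  · intro k l hkl
    have hd : AEDisjoint volume (trSet (w k) T) (trSet (w l) T) := hdis k l hkl
    exact hd.mono inter_subset_right inter_subset_right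
  · exact hf.mono_set (iUnion_subset fun k => inter_subset_left)

lemma integral_transfer (A : Matrix (Fin d) (Fin d) ℝ)
    (S T : Set (EuclideanSpace ℝ (Fin d))) (hS : MeasurableSet S) (hT : MeasurableSet T)
    (hSfin : volume S ≠ ⊤) (hTfin : volume T ≠ ⊤)
    (hScov : volume ((univ : Set (EuclideanSpace ℝ (Fin d))) \ ⋃ k, trSet (latVec A k) S) = 0)
    (hSdis : ∀ k l : Fin d → ℤ, k ≠ l →
      volume (trSet (latVec A k) S ∩ trSet (latVec A l) S) = 0)
    (hTcov : volume ((univ : Set (EuclideanSpace ℝ (Fin d))) \ ⋃ k, trSet (latVec A k) T) = 0)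
    (hTdis : ∀ k l : Fin d → ℤ, k ≠ l →
      volume (trSet (latVec A k) T ∩ trSet (latVec A l) T) = 0)
    (f : EuclideanSpace ℝ (Fin d) → ℂ) (hfm : Measurable f) (hfb : ∀ t, ‖f t‖ ≤ 1)
    (hper : ∀ (k : Fin d → ℤ) (t : EuclideanSpace ℝ (Fin d)), f (t + latVec A k) = f t) :
    ∫ t in S, f t = ∫ t in T, f t := by
  have h1 := integral_eq_tsum_pieces S T hS hT (fun k => latVec A k) hTcov hTdis f
    (integrableOn_of_bounded hSfin hfm hfb)
  have h2 : ∀ k : Fin d → ℤ, ∫ t in S ∩ trSet (latVec A k) T, f t =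
      ∫ t in trSet (latVec A (-k)) S ∩ T, f t := by
    intro k
    have hset : S ∩ trSet (latVec A k) T =
        trSet (latVec A k) (trSet (latVec A (-k)) S ∩ T) := by
      rw [trSet_inter, trSet_trSet, ← latVec_add,
        show (k + -k) = (0 : Fin d → ℤ) by simp, latVec_zero, trSet_zero]
    rw [hset, setIntegral_trSet]
    exact setIntegral_congr_fun ((measurableSet_trSet _ hS).inter hT)
      (fun t _ => hper k t)
  rw [h1]
  have h3 : ∑' k : Fin d → ℤ, ∫ t in S ∩ trSet (latVec A k) T, f t =
      ∑' k : Fin d → ℤ, ∫ t in trSet (latVec A k) S ∩ T, f t := by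
    rw [tsum_congr h2]
    exact (Equiv.neg (Fin d → ℤ)).tsum_eq fun j => ∫ t in trSet (latVec A j) S ∩ T, f t
  rw [h3]
  have h4 := integral_eq_tsum_pieces T S hT hS (fun k => latVec A k) hScov hSdis f
    (integrableOn_of_bounded hTfin hfm hfb)
  rw [h4]
  exact tsum_congr fun k => by rw [inter_comm]

lemma inner_latVec_apply (A : Matrix (Fin d) (Fin d) ℝ) (hA : A.det ≠ 0)
    (m : Fin d → ℤ) (s : EuclideanSpace ℝ (Fin d)) :
    (⟪latVec A⁻¹ᵀ m, (AEquiv A hA) s⟫ : ℝ) = ∑ i, (m i : ℝ) * s i := by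
  rw [PiLp.inner_apply]
  have h1 : ∀ i, (latVec A⁻¹ᵀ m) i = (Matrix.mulVec A⁻¹ᵀ (fun j => (m j : ℝ))) i := fun i => rfl
  have h2 : ∀ i, ((AEquiv A hA) s) i = (Matrix.mulVec A (fun j => s j)) i := fun i => rfl
  simp only [RCLike.inner_apply, conj_trivial]
  calc ∑ i, ((AEquiv A hA) s) i * (latVec A⁻¹ᵀ m) i
      = Matrix.mulVec A⁻¹ᵀ (fun j => (m j : ℝ)) ⬝ᵥ Matrix.mulVec A (fun j => s j) := by
        simp only [dotProduct]
        exact Finset.sum_congr rfl fun i _ => by rw [h1 i, h2 i, mul_comm]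
    _ = ∑ i, (m i : ℝ) * s i := by
        rw [Matrix.mulVec_transpose, Matrix.dotProduct_mulVec, Matrix.vecMul_vecMul,
          Matrix.nonsing_inv_mul A (isUnit_iff_ne_zero.2 hA), Matrix.vecMul_one]
        rfl

lemma inner_latVec_latVec (A : Matrix (Fin d) (Fin d) ℝ) (hA : A.det ≠ 0)
    (m k : Fin d → ℤ) :
    (⟪latVec A⁻¹ᵀ m, latVec A k⟫ : ℝ) = ((∑ i, m i * k i : ℤ) : ℝ) := by
  have h : latVec A k = (AEquiv A hA) (WithLp.toLp 2 (fun i => (k i : ℝ)) : EuclideanSpace ℝ (Fin d)) := rfl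
  rw [h, inner_latVec_apply A hA]
  push_cast
  rfl

def charF {d : ℕ} (ν : EuclideanSpace ℝ (Fin d)) (t : EuclideanSpace ℝ (Fin d)) : ℂ :=
  Complex.exp (2 * Real.pi * Complex.I * (⟪ν, t⟫ : ℝ))

lemma charF_measurable (ν : EuclideanSpace ℝ (Fin d)) : Measurable (charF ν) := by
  have h1 : Continuous fun t : EuclideanSpace ℝ (Fin d) => (⟪ν, t⟫ : ℝ) :=
    continuous_const.inner continuous_id
  exact (Complex.continuous_exp.comp
    ((continuous_const.mul (Complex.continuous_ofReal.comp h1)))).measurable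

lemma norm_charF (ν t : EuclideanSpace ℝ (Fin d)) : ‖charF ν t‖ = 1 := by
  rw [charF, show (2 * Real.pi * Complex.I * ((⟪ν, t⟫ : ℝ) : ℂ))
      = ((2 * Real.pi * (⟪ν, t⟫ : ℝ) : ℝ) : ℂ) * Complex.I by push_cast; ring,
    Complex.norm_exp_ofReal_mul_I]

lemma charF_add (ν t s : EuclideanSpace ℝ (Fin d)) :
    charF ν (t + s) = charF ν t * charF ν s := by
  simp only [charF, inner_add_right]
  rw [← Complex.exp_add]
  congr 1
  push_cast
  ring

lemma charF_int (A : Matrix (Fin d) (Fin d) ℝ) (hA : A.det ≠ 0) (m k : Fin d → ℤ) :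
    charF (latVec A⁻¹ᵀ m) (latVec A k) = 1 := by
  rw [charF, inner_latVec_latVec A hA]
  rw [show (2 * Real.pi * Complex.I * (((∑ i, m i * k i : ℤ) : ℝ) : ℂ))
      = ((∑ i, m i * k i : ℤ) : ℂ) * (2 * Real.pi * Complex.I) by push_cast; ring]
  exact Complex.exp_int_mul_two_pi_mul_I _

lemma charF_periodic (A : Matrix (Fin d) (Fin d) ℝ) (hA : A.det ≠ 0) (m : Fin d → ℤ)
    (k : Fin d → ℤ) (t : EuclideanSpace ℝ (Fin d)) :
    charF (latVec A⁻¹ᵀ m) (t + latVec A k) = charF (latVec A⁻¹ᵀ m) t := by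
  rw [charF_add, charF_int A hA, mul_one]

lemma integral_Ico_exp (c : ℤ) (hc : c ≠ 0) :
    ∫ u in Set.Ico (0:ℝ) 1, Complex.exp (2 * Real.pi * Complex.I * (c : ℂ) * (u : ℂ)) = 0 := by
  have hc' : (2 * Real.pi * Complex.I * (c : ℂ)) ≠ 0 := by
    refine mul_ne_zero (mul_ne_zero (mul_ne_zero two_ne_zero ?_) Complex.I_ne_zero) ?_
    · exact_mod_cast Complex.ofReal_ne_zero.2 Real.pi_ne_zero
    · exact_mod_cast Int.cast_ne_zero.2 hc
  rw [setIntegral_congr_set Ico_ae_eq_Ioc, ← intervalIntegral.integral_of_le zero_le_one,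
    integral_exp_mul_complex hc']
  rw [show ((2 * Real.pi * Complex.I * (c : ℂ)) * ((1:ℝ):ℂ))
      = (c : ℂ) * (2 * Real.pi * Complex.I) by push_cast; ring]
  rw [Complex.exp_int_mul_two_pi_mul_I c]
  simp

lemma integral_charF_unitCube (m : Fin d → ℤ) (hm : m ≠ 0) :
    ∫ x in unitCube d, Complex.exp
      (2 * Real.pi * Complex.I * ((∑ i, (m i : ℝ) * x i : ℝ) : ℂ)) = 0 := by
  -- transfer to the pi space
  have hmp := (EuclideanSpace.volume_preserving_symm_measurableEquiv_toLp (Fin d)).symm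
  have hemb : MeasurableEmbedding (((MeasurableEquiv.toLp 2 (Fin d → ℝ)).symm).symm) :=
    ((MeasurableEquiv.toLp 2 (Fin d → ℝ)).symm).symm.measurableEmbedding
  have hpre : (((MeasurableEquiv.toLp 2 (Fin d → ℝ)).symm).symm) ⁻¹' unitCube d =
      Set.univ.pi fun _ => Set.Ico (0:ℝ) 1 := by
    ext x; simp [unitCube]
  have htrans := hmp.setIntegral_preimage_emb hemb
    (fun t : EuclideanSpace ℝ (Fin d) => Complex.exp
      (2 * Real.pi * Complex.I * ((∑ i, (m i : ℝ) * t i : ℝ) : ℂ))) (unitCube d)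
  rw [← htrans, hpre]
  have hpi : MeasurableSet (Set.univ.pi fun _ : Fin d => Set.Ico (0:ℝ) 1) :=
    MeasurableSet.univ_pi fun _ => measurableSet_Ico
  rw [← integral_indicator hpi]
  have hpt : ∀ x : Fin d → ℝ,
      Set.indicator (Set.univ.pi fun _ => Set.Ico (0:ℝ) 1)
        (fun y => Complex.exp (2 * Real.pi * Complex.I *
          ((∑ i, (m i : ℝ) *
            (((MeasurableEquiv.toLp 2 (Fin d → ℝ)).symm).symm y) i : ℝ) : ℂ))) x =
      ∏ i, Set.indicator (Set.Ico (0:ℝ) 1)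
        (fun u => Complex.exp (2 * Real.pi * Complex.I * ((m i : ℤ) : ℂ) * (u : ℂ))) (x i) := by
    intro x
    by_cases hx : x ∈ Set.univ.pi fun _ : Fin d => Set.Ico (0:ℝ) 1
    · rw [Set.indicator_of_mem hx,
        Finset.prod_congr rfl (fun i _ => Set.indicator_of_mem (hx i trivial) _),
        ← Complex.exp_sum]
      congr 1
      push_cast
      rw [Finset.mul_sum]
      refine Finset.sum_congr rfl fun i _ => ?_
      rw [show (((MeasurableEquiv.toLp 2 (Fin d → ℝ)).symm).symm x) i = x i from rfl]
      ring
    · rw [Set.indicator_of_notMem hx]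
      obtain ⟨i, hi⟩ : ∃ i, x i ∉ Set.Ico (0:ℝ) 1 := by
        simpa [Set.mem_pi] using hx
      exact (Finset.prod_eq_zero (Finset.mem_univ i) (Set.indicator_of_notMem hi _)).symm
  rw [show (fun x : Fin d → ℝ => Set.indicator (Set.univ.pi fun _ => Set.Ico (0:ℝ) 1)
        (fun y => Complex.exp (2 * Real.pi * Complex.I *
          ((∑ i, (m i : ℝ) *
            (((MeasurableEquiv.toLp 2 (Fin d → ℝ)).symm).symm y) i : ℝ) : ℂ))) x) =
      (fun x : Fin d → ℝ => ∏ i, Set.indicator (Set.Ico (0:ℝ) 1)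
        (fun u => Complex.exp (2 * Real.pi * Complex.I * ((m i : ℤ) : ℂ) * (u : ℂ))) (x i))
    from funext hpt]
  rw [volume_pi, MeasureTheory.integral_fintype_prod_eq_prod
    (f := fun i (u : ℝ) => Set.indicator (Set.Ico (0:ℝ) 1)
      (fun u => Complex.exp (2 * Real.pi * Complex.I * ((m i : ℤ) : ℂ) * (u : ℂ))) u)]
  obtain ⟨i0, hi0⟩ : ∃ i, m i ≠ 0 := Function.ne_iff.1 hm
  refine Finset.prod_eq_zero (Finset.mem_univ i0) ?_
  rw [integral_indicator measurableSet_Ico]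
  exact integral_Ico_exp (m i0) hi0

lemma integral_charF_QSet (A : Matrix (Fin d) (Fin d) ℝ) (hA : A.det ≠ 0)
    (m : Fin d → ℤ) (hm : m ≠ 0) :
    ∫ t in QSet A hA, charF (latVec A⁻¹ᵀ m) t = 0 := by
  set L := LinearMap.toContinuousLinearMap ((AEquiv A hA) : EuclideanSpace ℝ (Fin d) →ₗ[ℝ]
    EuclideanSpace ℝ (Fin d)) with hL
  have himg : QSet A hA = (fun x => L x) '' unitCube d := rfl
  have hcv := integral_image_eq_integral_abs_det_fderiv_smul volume measurableSet_unitCube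
    (f' := fun _ => L) (fun x _ => L.hasFDerivAt.hasFDerivWithinAt)
    ((AEquiv A hA).injective.injOn) (charF (latVec A⁻¹ᵀ m))
  rw [himg, hcv]
  have hdet : L.det = A.det := det_AEquiv A hA
  have hval : ∀ x ∈ unitCube d, |L.det| • charF (latVec A⁻¹ᵀ m) (L x) =
      |A.det| • Complex.exp (2 * Real.pi * Complex.I * ((∑ i, (m i : ℝ) * x i : ℝ) : ℂ)) := by
    intro x _
    rw [hdet, charF, show (⟪latVec A⁻¹ᵀ m, L x⟫ : ℝ) = ∑ i, (m i : ℝ) * x i from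
      inner_latVec_apply A hA m x]
  rw [setIntegral_congr_fun measurableSet_unitCube hval, integral_smul]
  rw [integral_charF_unitCube m hm, smul_zero]

section main
variable (A : Matrix (Fin d) (Fin d) ℝ) (hA : A.det ≠ 0)
  {Ω : Set (EuclideanSpace ℝ (Fin d))} (hΩ : MeasurableSet Ω)
  (hfund : IsFundamentalDomain' A Ω)

lemma QSet_cov_null : volume ((univ : Set (EuclideanSpace ℝ (Fin d))) \
    ⋃ k : Fin d → ℤ, trSet (latVec A k) (QSet A hA)) = 0 := by
  rw [QSet_cover A hA]; simp

lemma QSet_dis_null : ∀ k l : Fin d → ℤ, k ≠ l →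
    volume (trSet (latVec A k) (QSet A hA) ∩ trSet (latVec A l) (QSet A hA)) = 0 := by
  intro k l h
  rw [Set.disjoint_iff_inter_eq_empty.1 (QSet_disjoint A hA h)]
  exact measure_empty

include hA hΩ hfund in
lemma volume_Omega_ne_top : volume Ω ≠ ⊤ :=
  fun h => by simpa [h] using (volume_le_QSet A hA hΩ hfund.1).trans_lt ENNReal.ofReal_lt_top

include hA hΩ hfund in
lemma integral_Omega_eq_QSet (f : EuclideanSpace ℝ (Fin d) → ℂ) (hfm : Measurable f)
    (hfb : ∀ t, ‖f t‖ ≤ 1)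
    (hper : ∀ (k : Fin d → ℤ) (t : EuclideanSpace ℝ (Fin d)), f (t + latVec A k) = f t) :
    ∫ t in Ω, f t = ∫ t in QSet A hA, f t := by
  refine integral_transfer A Ω (QSet A hA) hΩ (measurableSet_QSet A hA)
    (volume_Omega_ne_top A hA hΩ hfund) ?_ hfund.2 hfund.1 (QSet_cov_null A hA)
    (QSet_dis_null A hA) f hfm hfb hper
  rw [volume_QSet A hA]
  exact ENNReal.ofReal_ne_top

include hA hΩ hfund in
lemma integral_charF_Omega (m : Fin d → ℤ) (hm : m ≠ 0) :
    ∫ t in Ω, charF (latVec A⁻¹ᵀ m) t = 0 := by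
  rw [integral_Omega_eq_QSet A hA hΩ hfund _ (charF_measurable _)
    (fun t => le_of_eq (norm_charF _ t)) (fun k t => charF_periodic A hA m k t)]
  exact integral_charF_QSet A hA m hm

include hA hΩ hfund in
lemma volume_Omega_toReal : (volume Ω).toReal = |A.det| := by
  have h := integral_Omega_eq_QSet A hA hΩ hfund (fun _ => (1:ℂ)) measurable_const
    (fun t => by simp) (fun k t => rfl)
  rw [setIntegral_const, setIntegral_const] at h
  have h2 : ((volume Ω).toReal : ℂ) = ((volume (QSet A hA)).toReal : ℂ) := by
    simpa [Measure.real] using h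
  have h3 : (volume Ω).toReal = (volume (QSet A hA)).toReal := by exact_mod_cast h2
  rw [h3, volume_QSet A hA, ENNReal.toReal_ofReal (abs_nonneg _)]

end main

theorem gabor_chi_orthonormal_system {d : ℕ}
    (A B : Matrix (Fin d) (Fin d) ℝ) (hA : A.det ≠ 0) (hB : B.det ≠ 0)
    (Ω : Set (EuclideanSpace ℝ (Fin d))) (hΩ : MeasurableSet Ω)
    (hfund : IsFundamentalDomain' A Ω)
    (hpack : IsPacking B⁻¹ᵀ Ω) :
    (∀ k l k' l' : Fin d → ℤ, (k, l) ≠ (k', l') →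
      (∫ t : EuclideanSpace ℝ (Fin d),
        tfShift (latVec B⁻¹ᵀ k) (latVec A⁻¹ᵀ l) (chi Ω) t *
          (starRingEnd ℂ) (tfShift (latVec B⁻¹ᵀ k') (latVec A⁻¹ᵀ l') (chi Ω) t)) = 0) ∧
    (∀ k l : Fin d → ℤ,
      (∫ t : EuclideanSpace ℝ (Fin d),
        ‖tfShift (latVec B⁻¹ᵀ k) (latVec A⁻¹ᵀ l) (chi Ω) t‖ ^ 2) = |A.det|) := by
  constructor
  · intro k l k' l' hne
    by_cases hkk : k = k'
    · subst hkk
      have hll : l ≠ l' := fun h => hne (by rw [h])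
      set x := latVec B⁻¹ᵀ k with hx
      set ν := latVec A⁻¹ᵀ (l - l') with hν
      have hpt : ∀ t : EuclideanSpace ℝ (Fin d),
          tfShift x (latVec A⁻¹ᵀ l) (chi Ω) t *
            (starRingEnd ℂ) (tfShift x (latVec A⁻¹ᵀ l') (chi Ω) t) =
          Set.indicator (trSet x Ω) (charF ν) t := by
        intro t
        by_cases ht : t ∈ trSet x Ω
        · have htm : t - x ∈ Ω := mem_trSet.1 ht
          rw [Set.indicator_of_mem ht, tfShift, tfShift, chi,
            Set.indicator_of_mem htm, mul_one, mul_one, ← Complex.exp_conj,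
            ← Complex.exp_add, charF]
          congr 1
          have hinner : (⟪ν, t⟫ : ℝ) = ⟪latVec A⁻¹ᵀ l, t⟫ - ⟪latVec A⁻¹ᵀ l', t⟫ := by
            rw [hν, latVec_sub]
            exact inner_sub_left _ _ _
          rw [hinner]
          simp only [_root_.map_mul, Complex.conj_I, Complex.conj_ofReal, map_ofNat]
          push_cast
          ring
        · have htm : t - x ∉ Ω := fun h => ht (mem_trSet.2 h)
          rw [Set.indicator_of_notMem ht, tfShift, tfShift, chi,
            Set.indicator_of_notMem htm, mul_zero, mul_zero, zero_mul]
      rw [integral_congr_ae (Filter.Eventually.of_forall hpt),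
        integral_indicator (measurableSet_trSet x hΩ), setIntegral_trSet]
      have h2 : ∀ t ∈ Ω, charF ν (t + x) = charF ν x * charF ν t := by
        intro t _
        rw [charF_add]
        ring
      rw [setIntegral_congr_fun hΩ h2, integral_const_mul,
        integral_charF_Omega A hA hΩ hfund (l - l') (sub_ne_zero.2 hll), mul_zero]
    · -- k ≠ k' : supports are almost disjoint
      have hN := hpack k k' hkk
      have hzero : ∀ t : EuclideanSpace ℝ (Fin d),
          t ∉ trSet (latVec B⁻¹ᵀ k) Ω ∩ trSet (latVec B⁻¹ᵀ k') Ω →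
          tfShift (latVec B⁻¹ᵀ k) (latVec A⁻¹ᵀ l) (chi Ω) t *
            (starRingEnd ℂ) (tfShift (latVec B⁻¹ᵀ k') (latVec A⁻¹ᵀ l') (chi Ω) t) = 0 := by
        intro t ht
        rcases not_and_or.1 (fun h => ht ⟨h.1, h.2⟩) with h | h
        · have h3 : t - latVec B⁻¹ᵀ k ∉ Ω := fun hh => h (mem_trSet.2 hh)
          simp [tfShift, chi, Set.indicator_of_notMem h3]
        · have h3 : t - latVec B⁻¹ᵀ k' ∉ Ω := fun hh => h (mem_trSet.2 hh)
          simp [tfShift, chi, Set.indicator_of_notMem h3]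
      refine integral_eq_zero_of_ae ?_
      rw [Filter.EventuallyEq, ae_iff]
      refine measure_mono_null ?_ hN
      intro t ht
      by_contra htN
      exact ht (hzero t htN)
  · intro k l
    set x := latVec B⁻¹ᵀ k with hx
    set ω := latVec A⁻¹ᵀ l with hω
    have hpt : ∀ t : EuclideanSpace ℝ (Fin d),
        ‖tfShift x ω (chi Ω) t‖ ^ 2 =
        Set.indicator (trSet x Ω) (fun _ => (1:ℝ)) t := by
      intro t
      have h1 := norm_charF ω t
      rw [charF] at h1
      rw [tfShift, norm_mul, h1, one_mul]
      by_cases ht : t ∈ trSet x Ω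
      · have htm : t - x ∈ Ω := mem_trSet.1 ht
        rw [Set.indicator_of_mem ht, chi, Set.indicator_of_mem htm]
        simp
      · have htm : t - x ∉ Ω := fun h => ht (mem_trSet.2 h)
        rw [Set.indicator_of_notMem ht, chi, Set.indicator_of_notMem htm]
        simp
    rw [integral_congr_ae (Filter.Eventually.of_forall hpt),
      integral_indicator_const (1:ℝ) (measurableSet_trSet x hΩ), smul_eq_mul, mul_one, Measure.real,
      volume_trSet, volume_Omega_toReal A hA hΩ hfund]
end
end

section
/- Let m, n be coprime positive integers and let Ω = T·[0,1)² where T is the 2×2 matrix with rows (1/n, m) and (0, n). Then Ω is a fundamental domain for the lattice ℤ², i.e., the translates {Ω + k : k ∈ ℤ²} partition ℝ² (they are pairwise disjoint and cover ℝ²). -/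
open MeasureTheory Set Matrix

noncomputable section

/-- The half-open parallelogram `T · [0,1)²`. -/
def para (T : Matrix (Fin 2) (Fin 2) ℝ) : Set (EuclideanSpace ℝ (Fin 2)) :=
  (fun v : Fin 2 → ℝ => (WithLp.toLp 2 (T.mulVec v) : EuclideanSpace ℝ (Fin 2))) ''
    {v | ∀ i, v i ∈ Set.Ico (0 : ℝ) 1}

theorem parallelogram_exact_fundamental_domain (m n : ℕ)
    (hm : 0 < m) (hn : 0 < n) (hmn : Nat.Coprime m n) :
    let T : Matrix (Fin 2) (Fin 2) ℝ := !![1 / (n : ℝ), (m : ℝ); 0, (n : ℝ)]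
    (∀ k l : Fin 2 → ℤ, k ≠ l →
      Disjoint (trSet (latVec (1 : Matrix (Fin 2) (Fin 2) ℝ) k) (para T))
        (trSet (latVec (1 : Matrix (Fin 2) (Fin 2) ℝ) l) (para T))) ∧
    (⋃ k : Fin 2 → ℤ, trSet (latVec (1 : Matrix (Fin 2) (Fin 2) ℝ) k) (para T)) =
      (univ : Set (EuclideanSpace ℝ (Fin 2))) := by
  intro T
  have hnR : (0:ℝ) < n := Nat.cast_pos.mpr hn
  have hn0 : (n:ℝ) ≠ 0 := hnR.ne'
  have hlat : ∀ k : Fin 2 → ℤ, latVec (1 : Matrix (Fin 2) (Fin 2) ℝ) k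
      = (WithLp.toLp 2 (fun i => (k i : ℝ)) : EuclideanSpace ℝ (Fin 2)) := by
    intro k; simp [latVec, Matrix.one_mulVec]
  -- membership characterization
  have hmem : ∀ (k : Fin 2 → ℤ) (x : EuclideanSpace ℝ (Fin 2)),
      x ∈ trSet (latVec (1 : Matrix (Fin 2) (Fin 2) ℝ) k) (para T) ↔
      ((0:ℝ) ≤ (n:ℝ)*(x 0 - k 0) - m*(x 1 - k 1) ∧ (n:ℝ)*(x 0 - k 0) - m*(x 1 - k 1) < 1) ∧
      ((0:ℝ) ≤ x 1 - k 1 ∧ x 1 - k 1 < n) := by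
    intro k x
    rw [hlat]
    constructor
    · rintro ⟨y, ⟨v, hv, rfl⟩, rfl⟩
      obtain ⟨h00, h01⟩ := hv 0
      obtain ⟨h10, h11⟩ := hv 1
      beta_reduce
      have e0 : ((WithLp.toLp 2 (T.mulVec v) : EuclideanSpace ℝ (Fin 2)) + WithLp.toLp 2 (fun i => (k i : ℝ))) 0
          = 1/(n:ℝ) * v 0 + m * v 1 + k 0 := by
        show (T.mulVec v) 0 + (k 0 : ℝ) = _
        simp [T, Matrix.mulVec, dotProduct, Fin.sum_univ_two]
      have e1 : ((WithLp.toLp 2 (T.mulVec v) : EuclideanSpace ℝ (Fin 2)) + WithLp.toLp 2 (fun i => (k i : ℝ))) 1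
          = (n:ℝ) * v 1 + k 1 := by
        show (T.mulVec v) 1 + (k 1 : ℝ) = _
        simp [T, Matrix.mulVec, dotProduct, Fin.sum_univ_two]
      rw [e0, e1]
      have key : (n:ℝ)*(1/(n:ℝ) * v 0 + m * v 1 + k 0 - k 0) - m*((n:ℝ)*v 1 + k 1 - k 1)
          = v 0 := by field_simp; ring
      have key2 : (n:ℝ)*v 1 + k 1 - k 1 = n * v 1 := by ring
      rw [key, key2]
      refine ⟨⟨h00, h01⟩, by positivity, ?_⟩
      calc (n:ℝ) * v 1 < n * 1 := mul_lt_mul_of_pos_left h11 hnR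
        _ = n := mul_one _
    · rintro ⟨⟨h1, h2⟩, h3, h4⟩
      refine ⟨_, ⟨![(n:ℝ)*(x 0 - k 0) - m*(x 1 - k 1), (x 1 - k 1)/n], ?_, rfl⟩, ?_⟩
      · intro i
        fin_cases i
        · exact ⟨h1, h2⟩
        · show (x 1 - (k 1:ℝ))/n ∈ Set.Ico (0:ℝ) 1
          refine ⟨div_nonneg h3 hnR.le, ?_⟩
          rw [div_lt_one hnR]; exact h4
      · ext i
        fin_cases i
        · show (T.mulVec ![(n:ℝ)*(x 0 - k 0) - m*(x 1 - k 1), (x 1 - k 1)/n]) 0 + (k 0 : ℝ) = x 0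
          simp only [T, Matrix.mulVec, dotProduct, Fin.sum_univ_two,
            Matrix.cons_val_zero, Matrix.cons_val_one, Matrix.head_cons, Matrix.cons_val',
            Matrix.empty_val', Matrix.cons_val_fin_one, Matrix.head_fin_const, Matrix.of_apply]
          field_simp
          try ring
        · show (T.mulVec ![(n:ℝ)*(x 0 - k 0) - m*(x 1 - k 1), (x 1 - k 1)/n]) 1 + (k 1 : ℝ) = x 1
          simp only [T, Matrix.mulVec, dotProduct, Fin.sum_univ_two,
            Matrix.cons_val_zero, Matrix.cons_val_one, Matrix.head_cons, Matrix.cons_val',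
            Matrix.empty_val', Matrix.cons_val_fin_one, Matrix.head_fin_const, Matrix.of_apply]
          field_simp
          ring
  constructor
  · -- disjointness
    intro k l hkl
    rw [Set.disjoint_left]
    intro x hxk hxl
    rw [hmem] at hxk hxl
    obtain ⟨⟨k1a, k1b⟩, k2a, k2b⟩ := hxk
    obtain ⟨⟨l1a, l1b⟩, l2a, l2b⟩ := hxl
    have heq : (n:ℤ)*k 0 - m*k 1 = (n:ℤ)*l 0 - m*l 1 := by
      have hfk : ⌊(n:ℝ)*x 0 - m*x 1⌋ = (n:ℤ)*k 0 - m*k 1 := by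
        rw [Int.floor_eq_iff]
        push_cast
        constructor <;> nlinarith
      have hfl : ⌊(n:ℝ)*x 0 - m*x 1⌋ = (n:ℤ)*l 0 - m*l 1 := by
        rw [Int.floor_eq_iff]
        push_cast
        constructor <;> nlinarith
      rw [← hfk, ← hfl]
    have hdvd : (n:ℤ) ∣ (m:ℤ) * (k 1 - l 1) :=
      ⟨k 0 - l 0, by linear_combination -heq⟩
    have hcop : IsCoprime (n:ℤ) (m:ℤ) := Nat.isCoprime_iff_coprime.mpr hmn.symm
    have hdvd2 : (n:ℤ) ∣ (k 1 - l 1) := hcop.dvd_of_dvd_mul_left hdvd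
    have habsZ : |k 1 - l 1| < (n:ℤ) := by
      have habs : |((k 1 - l 1 : ℤ) : ℝ)| < (n:ℝ) := by
        push_cast
        rw [abs_sub_lt_iff]
        constructor <;> linarith
      rw [← Int.cast_abs] at habs
      exact_mod_cast habs
    have h11 : k 1 = l 1 := by
      rcases hdvd2 with ⟨c, hcc⟩
      have hn' : (0:ℤ) < n := by exact_mod_cast hn
      have hc' : |(n:ℤ)| * |c| < n := by rwa [hcc, abs_mul] at habsZ
      rw [abs_of_pos hn'] at hc'
      have hcabs : |c| < 1 := by nlinarith [abs_nonneg c]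
      have hc0 : c = 0 := Int.abs_lt_one_iff.mp hcabs
      rw [hc0, mul_zero] at hcc
      omega
    have h00 : k 0 = l 0 := by
      rw [h11] at heq
      have : (n:ℤ)*k 0 = (n:ℤ)*l 0 := by linarith
      have hnz : (n:ℤ) ≠ 0 := by exact_mod_cast hn.ne'
      exact mul_left_cancel₀ hnz this
    exact hkl (funext fun i => by fin_cases i <;> assumption)
  · -- covering
    rw [Set.eq_univ_iff_forall]
    intro x
    rw [Set.mem_iUnion]
    obtain ⟨u, v, huv⟩ := (Nat.isCoprime_iff_coprime.mpr hmn : IsCoprime (m:ℤ) n)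
    set a : ℝ := (n:ℝ)*x 0 - m*x 1 with ha
    set j : ℤ := ⌊a⌋ with hj
    set c : ℤ := -j*u with hc
    set q : ℤ := ⌊((x 1 : ℝ) - c)/n⌋ with hq
    refine ⟨![(j*v + m*q : ℤ), (c + n*q : ℤ)], ?_⟩
    rw [hmem]
    have e10 : (![(j*v + m*q : ℤ), (c + n*q : ℤ)] : Fin 2 → ℤ) 0 = j*v + m*q := rfl
    have e11 : (![(j*v + m*q : ℤ), (c + n*q : ℤ)] : Fin 2 → ℤ) 1 = c + n*q := rfl
    rw [e10, e11]
    have hZ : (n:ℤ)*(j*v + m*q) - m*(c + n*q) = j := by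
      rw [hc]; linear_combination j * huv
    have hZR := congrArg (fun z : ℤ => (z : ℝ)) hZ
    push_cast at hZR
    have key : (n:ℝ)*(x 0 - ((j*v + m*q : ℤ) : ℝ)) - m*(x 1 - ((c + n*q : ℤ):ℝ)) = a - j := by
      rw [ha]
      push_cast
      linear_combination -hZR
    have hqb1 : (q:ℝ) * n ≤ (x 1 : ℝ) - c := by
      rw [← le_div_iff₀ hnR]; exact Int.floor_le _
    have hqb2 : (x 1 : ℝ) - c < ((q:ℝ)+1) * n := by
      rw [← div_lt_iff₀ hnR]; exact Int.lt_floor_add_one _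
    constructor
    · rw [key]
      exact ⟨sub_nonneg.mpr (Int.floor_le a), by linarith [Int.lt_floor_add_one a]⟩
    · push_cast
      constructor <;> nlinarith
end
end

section
/- Let m, n be coprime positive integers and let Ω = T·[0,1)² with T = [[1/n, m],[0, n]]. Then Ω is simultaneously a fundamental domain for each of the three lattices ℤ², D·ℤ² with D = diag(m/n, n/m), and T·ℤ² itself: the translates of Ω by each of these lattices partition ℝ² up to null sets. -/
open MeasureTheory Set Matrix

noncomputable section

lemma lemA (c a B : ℤ) (hc : 0 < c) : ∃! t : ℤ, B - c < a + c * t ∧ a + c * t ≤ B := by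
  refine ⟨(B - a) / c, ⟨?_, ?_⟩, ?_⟩
  · have h := Int.lt_ediv_add_one_mul_self (B - a) hc
    nlinarith [h]
  · have h := Int.ediv_mul_le (B - a) (ne_of_gt hc)
    nlinarith [h]
  · intro t' ⟨h1, h2⟩
    have hu : t' ≤ (B - a) / c := Int.le_ediv_iff_mul_le hc |>.mpr (by nlinarith)
    have hl : (B - a) / c < t' + 1 := Int.ediv_lt_iff_lt_mul hc |>.mpr (by nlinarith)
    omega

lemma lemB (a b w S B : ℤ) (ha : 0 < a) (hw : 0 < w) (hco : IsCoprime a b) :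
    ∃! p : ℤ × ℤ, a * p.1 - b * p.2 = S ∧ B - w * a < w * p.2 ∧ w * p.2 ≤ B := by
  obtain ⟨u, v, huv⟩ := hco
  set x0 : ℤ := u * S with hx0
  set y0 : ℤ := -(v * S) with hy0
  have hbase : a * x0 - b * y0 = S := by rw [hx0, hy0]; linear_combination S * huv
  obtain ⟨t, ⟨ht1, ht2⟩, htu⟩ := lemA (w * a) (w * y0) B (by positivity)
  refine ⟨(x0 + b * t, y0 + a * t), ⟨by linear_combination hbase, ?_, ?_⟩, ?_⟩
  · have : w * (y0 + a * t) = w * y0 + w * a * t := by ring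
    rw [this]; linarith
  · have : w * (y0 + a * t) = w * y0 + w * a * t := by ring
    rw [this]; linarith
  · rintro ⟨p1, p2⟩ ⟨hp1, hp2, hp3⟩
    simp only at hp1 hp2 hp3 ⊢
    have hdvd : a ∣ b * (p2 - y0) :=
      ⟨p1 - x0, by linear_combination hbase - hp1⟩
    have hdvd2 : a ∣ (p2 - y0) := (IsCoprime.dvd_of_dvd_mul_left ⟨u, v, huv⟩ hdvd)
    obtain ⟨t', ht'⟩ := hdvd2
    have hp2' : p2 = y0 + a * t' := by omega
    have hp1' : p1 = x0 + b * t' := by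
      have : a * (p1 - x0) = a * (b * t') := by linear_combination hp1 - hbase + b * ht'
      have := mul_left_cancel₀ (ne_of_gt ha) this
      omega
    have : t' = t := htu t' ⟨by nlinarith, by nlinarith⟩
    subst this; rw [hp1', hp2']

lemma reduce_iff (s r : ℝ) (z w c B S : ℤ) (hS : S = ⌊s⌋) (hB : B = ⌊r⌋) :
    ((s - (z:ℝ)) ∈ Set.Ico (0:ℝ) 1 ∧ (r - (w:ℝ)) ∈ Set.Ico (0:ℝ) (c:ℝ)) ↔
      (z = S ∧ B - c < w ∧ w ≤ B) := by
  subst hS hB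
  simp only [Set.mem_Ico]
  constructor
  · rintro ⟨⟨h1, h2⟩, h3, h4⟩
    refine ⟨?_, ?_, ?_⟩
    · have : ⌊s⌋ = z := Int.floor_eq_iff.mpr ⟨by linarith, by push_cast; linarith⟩
      omega
    · have : r < ((w + c : ℤ) : ℝ) := by push_cast; linarith
      have := Int.floor_lt.mpr this
      omega
    · exact Int.le_floor.mpr (by linarith)
  · rintro ⟨h1, h2, h3⟩
    subst h1
    have hf1 := Int.floor_le s
    have hf2 := Int.lt_floor_add_one s
    have hw1 : (w : ℝ) ≤ r := by
      have : (w : ℝ) ≤ (⌊r⌋ : ℝ) := by exact_mod_cast h3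
      linarith [Int.floor_le r]
    have hw2 : r < ((w + c : ℤ) : ℝ) := Int.floor_lt.mp (by omega)
    push_cast at hw2
    refine ⟨⟨by linarith, by linarith⟩, by linarith, by linarith⟩

lemma mem_Ico_scale (μ q c : ℝ) (hμ : 0 < μ) : q ∈ Set.Ico 0 c ↔ μ * q ∈ Set.Ico 0 (μ * c) := by
  simp only [Set.mem_Ico]
  constructor
  · rintro ⟨h1, h2⟩
    exact ⟨mul_nonneg hμ.le h1, by nlinarith⟩
  · rintro ⟨h1, h2⟩
    exact ⟨by nlinarith, by nlinarith⟩

lemma mem_trSet_iff {d : ℕ} (v x : EuclideanSpace ℝ (Fin d)) (Ω : Set (EuclideanSpace ℝ (Fin d))) :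
    x ∈ trSet v Ω ↔ x - v ∈ Ω := by
  constructor
  · rintro ⟨y, hy, rfl⟩; simpa using hy
  · intro h; exact ⟨x - v, h, by simp⟩

lemma fd_of_unique {d : ℕ} (M : Matrix (Fin d) (Fin d) ℝ) (Ω : Set (EuclideanSpace ℝ (Fin d)))
    (h : ∀ x, ∃! k : Fin d → ℤ, x ∈ trSet (latVec M k) Ω) : IsFundamentalDomain' M Ω := by
  constructor
  · intro k l hkl
    have : trSet (latVec M k) Ω ∩ trSet (latVec M l) Ω = ∅ := by
      ext x
      simp only [Set.mem_inter_iff, Set.mem_empty_iff_false, iff_false, not_and]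
      intro h1 h2
      obtain ⟨k', _, hu⟩ := h x
      exact hkl ((hu k h1).trans (hu l h2).symm)
    rw [this]; simp
  · have : (univ : Set (EuclideanSpace ℝ (Fin d))) \ ⋃ k : Fin d → ℤ, trSet (latVec M k) Ω = ∅ := by
      rw [Set.diff_eq_empty]
      intro x _
      obtain ⟨k, hk, _⟩ := h x
      exact Set.mem_iUnion.mpr ⟨k, hk⟩
    rw [this]; simp

lemma existsUnique_fun_of_pair {P : (Fin 2 → ℤ) → Prop}
    (h : ∃! p : ℤ × ℤ, P ![p.1, p.2]) : ∃! k : Fin 2 → ℤ, P k := by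
  have hk : ∀ k : Fin 2 → ℤ, ![k 0, k 1] = k := by
    intro k; funext i; fin_cases i <;> rfl
  obtain ⟨p, hp, hu⟩ := h
  refine ⟨![p.1, p.2], hp, fun k hkP => ?_⟩
  have : (k 0, k 1) = p := hu (k 0, k 1) (show P ![k 0, k 1] by rw [hk k]; exact hkP)
  rw [← hk k, ← this]

lemma mem_para_iff (m n : ℕ) (hn : 0 < n) (y : EuclideanSpace ℝ (Fin 2)) :
    y ∈ para !![1 / (n : ℝ), (m : ℝ); 0, (n : ℝ)] ↔
      ((n : ℝ) * y 0 - (m : ℝ) * y 1 ∈ Set.Ico (0:ℝ) 1 ∧ y 1 ∈ Set.Ico (0:ℝ) (n : ℝ)) := by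
  have hn' : (0:ℝ) < n := by exact_mod_cast hn
  constructor
  · rintro ⟨v, hv, rfl⟩
    have h0 : (!![1 / (n : ℝ), (m : ℝ); 0, (n : ℝ)].mulVec v) 0 = 1/(n:ℝ) * v 0 + m * v 1 := by
      simp [Matrix.mulVec, dotProduct, Fin.sum_univ_two]
    have h1 : (!![1 / (n : ℝ), (m : ℝ); 0, (n : ℝ)].mulVec v) 1 = (n:ℝ) * v 1 := by
      simp [Matrix.mulVec, dotProduct, Fin.sum_univ_two]
    have hv0 := hv 0
    have hv1 := hv 1
    simp only [Set.mem_Ico] at hv0 hv1 ⊢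
    constructor
    · have : (n:ℝ) * (1/(n:ℝ) * v 0 + m * v 1) - m * ((n:ℝ) * v 1) = v 0 := by
        field_simp
        ring
      rw [show ((!![1 / (n : ℝ), (m : ℝ); 0, (n : ℝ)].mulVec v : Fin 2 → ℝ) 0) = 1/(n:ℝ) * v 0 + m * v 1 from h0,
        show ((!![1 / (n : ℝ), (m : ℝ); 0, (n : ℝ)].mulVec v : Fin 2 → ℝ) 1) = (n:ℝ) * v 1 from h1, this]
      exact hv0
    · rw [show ((!![1 / (n : ℝ), (m : ℝ); 0, (n : ℝ)].mulVec v : Fin 2 → ℝ) 1) = (n:ℝ) * v 1 from h1]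
      constructor
      · exact mul_nonneg hn'.le hv1.1
      · nlinarith [hv1.2]
  · rintro ⟨hc1, hc2⟩
    refine ⟨![(n:ℝ) * y 0 - m * y 1, y 1 / n], ?_, ?_⟩
    · intro i
      fin_cases i
      · simpa using hc1
      · simp only [Set.mem_Ico] at hc2 ⊢
        show (0:ℝ) ≤ y 1 / n ∧ y 1 / n < 1
        constructor
        · exact div_nonneg hc2.1 hn'.le
        · rw [div_lt_one hn']
          exact hc2.2
    · ext i
      fin_cases i <;>
        simp [Matrix.mulVec, dotProduct, Fin.sum_univ_two] <;> field_simp <;> ring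

-- Case 1: the identity lattice ℤ²
lemma key1 (m n : ℕ) (hn : 0 < n) (hmn : Nat.Coprime m n) (x : EuclideanSpace ℝ (Fin 2)) :
    ∃! k : Fin 2 → ℤ, x ∈ trSet (latVec (1 : Matrix (Fin 2) (Fin 2) ℝ) k)
      (para !![1 / (n : ℝ), (m : ℝ); 0, (n : ℝ)]) := by
  have hn' : (0:ℝ) < n := by exact_mod_cast hn
  have hco : IsCoprime (n:ℤ) (m:ℤ) := Nat.isCoprime_iff_coprime.mpr hmn.symm
  apply existsUnique_fun_of_pair
  refine (existsUnique_congr (fun p => ?_)).mpr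
    (lemB (n:ℤ) (m:ℤ) 1 ⌊(n:ℝ) * x 0 - (m:ℝ) * x 1⌋ ⌊x 1⌋ (by exact_mod_cast hn) one_pos hco)
  rw [mem_trSet_iff, mem_para_iff m n hn]
  have e0 : (x - latVec (1 : Matrix (Fin 2) (Fin 2) ℝ) ![p.1, p.2]) 0 = x 0 - (p.1 : ℝ) := by
    simp [latVec, Matrix.one_mulVec]
  have e1 : (x - latVec (1 : Matrix (Fin 2) (Fin 2) ℝ) ![p.1, p.2]) 1 = x 1 - (p.2 : ℝ) := by
    simp [latVec, Matrix.one_mulVec]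
  rw [e0, e1]
  set s : ℝ := (n:ℝ) * x 0 - (m:ℝ) * x 1 with hs
  have E1 : (n:ℝ) * (x 0 - (p.1:ℝ)) - (m:ℝ) * (x 1 - (p.2:ℝ))
      = s - (((n:ℤ) * p.1 - (m:ℤ) * p.2 : ℤ) : ℝ) := by
    rw [hs]; push_cast; ring
  have E2 : x 1 - (p.2 : ℝ) = x 1 - (((1 * p.2 : ℤ)) : ℝ) := by push_cast; ring
  have E3 : ((n:ℕ) : ℝ) = (((1 * (n:ℤ) : ℤ)) : ℝ) := by push_cast; ring
  rw [E1, E2, E3]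
  exact reduce_iff s (x 1) ((n:ℤ) * p.1 - (m:ℤ) * p.2) (1 * p.2) (1 * (n:ℤ))
    ⌊x 1⌋ ⌊s⌋ rfl rfl

-- Case 2: the lattice D·ℤ²
lemma key2 (m n : ℕ) (hm : 0 < m) (hn : 0 < n) (hmn : Nat.Coprime m n)
    (x : EuclideanSpace ℝ (Fin 2)) :
    ∃! k : Fin 2 → ℤ, x ∈ trSet (latVec !![(m : ℝ) / (n : ℝ), 0; 0, (n : ℝ) / (m : ℝ)] k)
      (para !![1 / (n : ℝ), (m : ℝ); 0, (n : ℝ)]) := by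
  have hn' : (0:ℝ) < n := by exact_mod_cast hn
  have hm' : (0:ℝ) < m := by exact_mod_cast hm
  have hco : IsCoprime (m:ℤ) (n:ℤ) := Nat.isCoprime_iff_coprime.mpr hmn
  apply existsUnique_fun_of_pair
  refine (existsUnique_congr (fun p => ?_)).mpr
    (lemB (m:ℤ) (n:ℤ) (n:ℤ) ⌊(n:ℝ) * x 0 - (m:ℝ) * x 1⌋ ⌊(m:ℝ) * x 1⌋
      (by exact_mod_cast hm) (by exact_mod_cast hn) hco)
  rw [mem_trSet_iff, mem_para_iff m n hn]
  have e0 : (x - latVec !![(m : ℝ) / (n : ℝ), 0; 0, (n : ℝ) / (m : ℝ)] ![p.1, p.2]) 0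
      = x 0 - (m:ℝ) / (n:ℝ) * (p.1 : ℝ) := by
    simp [latVec, Matrix.mulVec, dotProduct, Fin.sum_univ_two]
  have e1 : (x - latVec !![(m : ℝ) / (n : ℝ), 0; 0, (n : ℝ) / (m : ℝ)] ![p.1, p.2]) 1
      = x 1 - (n:ℝ) / (m:ℝ) * (p.2 : ℝ) := by
    simp [latVec, Matrix.mulVec, dotProduct, Fin.sum_univ_two]
  rw [e0, e1, mem_Ico_scale (m:ℝ) (x 1 - (n:ℝ) / (m:ℝ) * (p.2 : ℝ)) ((n:ℕ):ℝ) hm']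
  set s : ℝ := (n:ℝ) * x 0 - (m:ℝ) * x 1 with hs
  set r : ℝ := (m:ℝ) * x 1 with hr
  have E1 : (n:ℝ) * (x 0 - (m:ℝ)/(n:ℝ) * (p.1:ℝ)) - (m:ℝ) * (x 1 - (n:ℝ)/(m:ℝ) * (p.2:ℝ))
      = s - (((m:ℤ) * p.1 - (n:ℤ) * p.2 : ℤ) : ℝ) := by
    rw [hs]; push_cast; field_simp; ring
  have E2 : (m:ℝ) * (x 1 - (n:ℝ)/(m:ℝ) * (p.2:ℝ)) = r - (((n:ℤ) * p.2 : ℤ) : ℝ) := by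
    rw [hr]; push_cast; field_simp
  have E3 : (m:ℝ) * ((n:ℕ):ℝ) = (((n:ℤ) * (m:ℤ) : ℤ) : ℝ) := by push_cast; ring
  rw [E1, E2, E3]
  exact reduce_iff s r ((m:ℤ) * p.1 - (n:ℤ) * p.2) ((n:ℤ) * p.2) ((n:ℤ) * (m:ℤ))
    ⌊r⌋ ⌊s⌋ rfl rfl

-- Case 3: the lattice T·ℤ²
lemma key3 (m n : ℕ) (hn : 0 < n) (x : EuclideanSpace ℝ (Fin 2)) :
    ∃! k : Fin 2 → ℤ, x ∈ trSet (latVec !![1 / (n : ℝ), (m : ℝ); 0, (n : ℝ)] k)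
      (para !![1 / (n : ℝ), (m : ℝ); 0, (n : ℝ)]) := by
  have hn' : (0:ℝ) < n := by exact_mod_cast hn
  have hco : IsCoprime (1:ℤ) (0:ℤ) := isCoprime_one_left
  apply existsUnique_fun_of_pair
  refine (existsUnique_congr (fun p => ?_)).mpr
    (lemB 1 0 (n:ℤ) ⌊(n:ℝ) * x 0 - (m:ℝ) * x 1⌋ ⌊x 1⌋ one_pos (by exact_mod_cast hn) hco)
  rw [mem_trSet_iff, mem_para_iff m n hn]
  have e0 : (x - latVec !![1 / (n : ℝ), (m : ℝ); 0, (n : ℝ)] ![p.1, p.2]) 0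
      = x 0 - (1/(n:ℝ) * (p.1 : ℝ) + (m:ℝ) * (p.2 : ℝ)) := by
    simp [latVec, Matrix.mulVec, dotProduct, Fin.sum_univ_two]
  have e1 : (x - latVec !![1 / (n : ℝ), (m : ℝ); 0, (n : ℝ)] ![p.1, p.2]) 1
      = x 1 - (n:ℝ) * (p.2 : ℝ) := by
    simp [latVec, Matrix.mulVec, dotProduct, Fin.sum_univ_two]
  rw [e0, e1]
  set s : ℝ := (n:ℝ) * x 0 - (m:ℝ) * x 1 with hs
  have E1 : (n:ℝ) * (x 0 - (1/(n:ℝ) * (p.1:ℝ) + (m:ℝ) * (p.2:ℝ))) - (m:ℝ) * (x 1 - (n:ℝ) * (p.2:ℝ))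
      = s - (((1 * p.1 - 0 * p.2 : ℤ)) : ℝ) := by
    rw [hs]; push_cast; field_simp; ring
  have E2 : x 1 - (n:ℝ) * (p.2:ℝ) = x 1 - (((n:ℤ) * p.2 : ℤ) : ℝ) := by push_cast; ring
  have E3 : ((n:ℕ) : ℝ) = (((n:ℤ) * 1 : ℤ) : ℝ) := by push_cast; ring
  rw [E1, E2, E3]
  exact reduce_iff s (x 1) (1 * p.1 - 0 * p.2) ((n:ℤ) * p.2) ((n:ℤ) * 1) ⌊x 1⌋ ⌊s⌋ rfl rfl

theorem parallelogram_common_fundamental_domain_three_lattices (m n : ℕ)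
    (hm : 0 < m) (hn : 0 < n) (hmn : Nat.Coprime m n) :
    let T : Matrix (Fin 2) (Fin 2) ℝ := !![1 / (n : ℝ), (m : ℝ); 0, (n : ℝ)]
    let D : Matrix (Fin 2) (Fin 2) ℝ := !![(m : ℝ) / (n : ℝ), 0; 0, (n : ℝ) / (m : ℝ)]
    IsFundamentalDomain' (1 : Matrix (Fin 2) (Fin 2) ℝ) (para T) ∧
      IsFundamentalDomain' D (para T) ∧
      IsFundamentalDomain' T (para T) := by
  intro T D
  exact ⟨fd_of_unique _ _ (key1 m n hn hmn),
    fd_of_unique _ _ (key2 m n hm hn hmn),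
    fd_of_unique _ _ (key3 m n hn)⟩
end
end
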